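/- Let d ≥ 2 and let p and q be generic configurations of d+2 points in ℝ^d that are related by a similarity σ (i.e., q_i = σ(p_i) for all i). Suppose moreover that p and q share an unordered subset S of d+1 common points, that is, some d+1 of the points of p coincide as a set with d+1 of the points of q. Then p = q. -/
import Mathlib


/-- Euclidean distance between two points of ℝ^d. -/
noncomputable def eudist {d : ℕ} (x y : Fin d → ℝ) : ℝ :=
  Real.sqrt (∑ k, (x k - y k) ^ 2)

/-- Squared Euclidean length along an edge (an unordered pair of vertices) of a
configuration. -/
noncomputable def sqLenR {n d : ℕ} (p : Fin n → Fin d → ℝ) : Sym2 (Fin n) → ℝ :=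
  Sym2.lift ⟨fun i j => ∑ k, (p i k - p j k) ^ 2,
    fun i j => Finset.sum_congr rfl fun k _ => by ring⟩

/-- Euclidean length along an edge of a configuration. -/
noncomputable def lenR {n d : ℕ} (p : Fin n → Fin d → ℝ) (e : Sym2 (Fin n)) : ℝ :=
  Real.sqrt (sqLenR p e)

/-- A generic configuration of `n` points in ℝ^d: its `d·n` coordinates satisfy no
nontrivial polynomial equation with rational coefficients. -/
def GenericConfig {n d : ℕ} (p : Fin n → Fin d → ℝ) : Prop :=
  ∀ f : MvPolynomial (Fin n × Fin d) ℚ, f ≠ 0 →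
    MvPolynomial.aeval (fun ik : Fin n × Fin d => p ik.1 ik.2) f ≠ 0

/-- A congruence of ℝ^d: a distance-preserving bijection. -/
def IsCongruence {d : ℕ} (f : (Fin d → ℝ) → (Fin d → ℝ)) : Prop :=
  Function.Bijective f ∧ ∀ x y, eudist (f x) (f y) = eudist x y

/-- A similarity of ℝ^d: a bijection scaling all distances by a fixed positive
ratio (equivalently, the composition of a positive scaling and a
distance-preserving bijection). -/
def IsSimilarity {d : ℕ} (f : (Fin d → ℝ) → (Fin d → ℝ)) : Prop :=
  Function.Bijective f ∧ ∃ r : ℝ, 0 < r ∧ ∀ x y, eudist (f x) (f y) = r * eudist x y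

/-! Auxiliary material. -/

open MvPolynomial in
/-- The squared-distance polynomial between two labelled points. -/
noncomputable def sqP {n d : ℕ} (u w : Fin n) : MvPolynomial (Fin n × Fin d) ℚ :=
  ∑ k : Fin d, (X (u, k) - X (w, k)) ^ 2

lemma aeval_sqP {n d : ℕ} (u w : Fin n) {R : Type*} [CommRing R] [Algebra ℚ R]
    (x : Fin n × Fin d → R) :
    MvPolynomial.aeval x (sqP (d := d) u w) = ∑ k, (x (u, k) - x (w, k)) ^ 2 := by
  simp [sqP]

lemma generic_inj {n d : ℕ} (hd0 : 0 < d) {p : Fin n → Fin d → ℝ}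
    (hp : GenericConfig p) : Function.Injective p := by
  intro u w h
  by_contra hne
  set z : Fin d := ⟨0, hd0⟩
  set f : MvPolynomial (Fin n × Fin d) ℚ := MvPolynomial.X (u, z) - MvPolynomial.X (w, z)
    with hfdef
  have hf : f ≠ 0 := by
    intro h0
    have h1 := congrArg
      (MvPolynomial.aeval (fun ik : Fin n × Fin d => if ik = (u, z) then (1 : ℚ) else 0)) h0
    have hwz : ((w, z) : Fin n × Fin d) ≠ (u, z) := by
      simp [Prod.ext_iff]; intro h'; exact absurd h'.symm hne
    simp [hfdef, hwz] at h1
  apply hp f hf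
  simp [hfdef, h]

lemma sq_sum_ne {d : ℕ} {x y : Fin d → ℝ} (h : x ≠ y) :
    ∑ k, (x k - y k) ^ 2 ≠ 0 := by
  intro h0
  apply h
  funext k
  have hk := (Finset.sum_eq_zero_iff_of_nonneg (fun k _ => sq_nonneg (x k - y k))).mp h0 k
    (Finset.mem_univ k)
  have := pow_eq_zero_iff (n := 2) (by norm_num) |>.mp hk
  linarith [sub_eq_zero.mp this]

lemma sq_eudist {d : ℕ} (x y : Fin d → ℝ) :
    (eudist x y) ^ 2 = ∑ k, (x k - y k) ^ 2 :=
  Real.sq_sqrt (Finset.sum_nonneg fun k _ => sq_nonneg _)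

/-- Let `d ≥ 2` and let `p` and `q` be generic configurations
of `d+2` points in ℝ^d related by a similarity `σ` (that is `q i = σ (p i)` for
all `i`).  If moreover some `d+1` of the points of `p` coincide, as an unordered
set, with `d+1` of the points of `q`, then `p = q`. -/
theorem similar_configs_sharing_simplex_are_equal
    {d : ℕ} (hd : 2 ≤ d) (p q : Fin (d + 2) → Fin d → ℝ)
    (hp : GenericConfig p) (hq : GenericConfig q)
    (σ : (Fin d → ℝ) → (Fin d → ℝ)) (hσ : IsSimilarity σ)
    (hpq : ∀ i, q i = σ (p i))
    (hS : ∃ I J : Finset (Fin (d + 2)), I.card = d + 1 ∧ J.card = d + 1 ∧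
      p '' ↑I = q '' ↑J) :
    p = q := by
  classical
  obtain ⟨I, J, hI, hJ, hIJ⟩ := hS
  obtain ⟨hσbij, r, hr, hrdist⟩ := hσ
  have hd0 : 0 < d := by omega
  have hpinj : Function.Injective p := generic_inj hd0 hp
  have hqinj : Function.Injective q := generic_inj hd0 hq
  set pval : Fin (d + 2) × Fin d → ℝ := fun ik => p ik.1 ik.2 with hpval
  -- the matching between the two copies of the shared simplex
  have hex : ∀ i, i ∈ I → ∃ j, q j = p i := by
    intro i hi
    have : p i ∈ q '' ↑J := by
      rw [← hIJ]; exact Set.mem_image_of_mem p hi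
    obtain ⟨j, _, hj⟩ := this
    exact ⟨j, hj⟩
  choose! φ hφ using hex
  have hφinjI : ∀ i ∈ I, ∀ j ∈ I, φ i = φ j → i = j := by
    intro i hi j hj h
    apply hpinj
    rw [← hφ i hi, ← hφ j hj, h]
  -- squared-distance relation from the similarity
  have hsq : ∀ x y, ∑ k, (q x k - q y k) ^ 2 = r ^ 2 * ∑ k, (p x k - p y k) ^ 2 := by
    intro x y
    have h1 : eudist (q x) (q y) = r * eudist (p x) (p y) := by
      rw [hpq x, hpq y]; exact hrdist _ _
    calc ∑ k, (q x k - q y k) ^ 2 = (eudist (q x) (q y)) ^ 2 := (sq_eudist _ _).symm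
      _ = (r * eudist (p x) (p y)) ^ 2 := by rw [h1]
      _ = r ^ 2 * (eudist (p x) (p y)) ^ 2 := by ring
      _ = r ^ 2 * ∑ k, (p x k - p y k) ^ 2 := by rw [sq_eudist]
  have key : ∀ i ∈ I, ∀ j ∈ I,
      ∑ k, (p i k - p j k) ^ 2 = r ^ 2 * ∑ k, (p (φ i) k - p (φ j) k) ^ 2 := by
    intro i hi j hj
    rw [← hφ i hi, ← hφ j hj]
    exact hsq (φ i) (φ j)
  -- the matching fixes or swaps pairs
  have pairfix : ∀ i₀ ∈ I, ∀ j₀ ∈ I, i₀ ≠ j₀ →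
      (φ i₀ = i₀ ∧ φ j₀ = j₀) ∨ (φ i₀ = j₀ ∧ φ j₀ = i₀) := by
    intro i₀ hi₀ j₀ hj₀ hij
    by_contra hC
    -- pick a third point of the simplex
    have hcard2 : ({i₀, j₀} : Finset (Fin (d + 2))).card ≤ 2 := by
      apply le_trans (Finset.card_insert_le _ _); simp
    have hsd := Finset.card_le_card_sdiff_add_card (s := I) (t := {i₀, j₀})
    have hpos : 0 < (I \ {i₀, j₀}).card := by omega
    obtain ⟨k₀, hk₀⟩ := Finset.card_pos.mp hpos
    have hk₀I : k₀ ∈ I := (Finset.mem_sdiff.mp hk₀).1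
    have hk₀' := (Finset.mem_sdiff.mp hk₀).2
    have hk₀i : k₀ ≠ i₀ := by intro h; exact hk₀' (by simp [h])
    have hk₀j : k₀ ≠ j₀ := by intro h; exact hk₀' (by simp [h])
    set a := φ i₀ with ha
    set b := φ j₀ with hb
    set c := φ k₀ with hc
    have hab : a ≠ b := fun h => hij (hφinjI _ hi₀ _ hj₀ h)
    have hac : a ≠ c := fun h => hk₀i (hφinjI _ hk₀I _ hi₀ h.symm)
    have hbc : b ≠ c := fun h => hk₀j (hφinjI _ hk₀I _ hj₀ h.symm)
    set z : Fin d := ⟨0, hd0⟩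
    set v : Fin (d + 2) → ℚ := fun u => if u = b then (a.val : ℚ) else (u.val : ℚ) with hv
    set x : Fin (d + 2) × Fin d → ℚ := fun uk => if uk.2 = z then v uk.1 else 0 with hx
    have haevalx : ∀ u w : Fin (d + 2),
        MvPolynomial.aeval x (sqP (d := d) u w) = (v u - v w) ^ 2 := by
      intro u w
      rw [aeval_sqP]
      have hterm : ∀ k : Fin d, (x (u, k) - x (w, k)) ^ 2
          = if k = z then (v u - v w) ^ 2 else 0 := by
        intro k; by_cases h : k = z <;> simp [hx, h]
      rw [Finset.sum_congr rfl fun k _ => hterm k]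
      simp
    -- values of v
    have hvab : v a = v b := by
      have : v a = (a.val : ℚ) := by simp [hv, hab]
      have hvb : v b = (a.val : ℚ) := by simp [hv]
      rw [this, hvb]
    have hvac : v a ≠ v c := by
      have h1 : v a = (a.val : ℚ) := by simp [hv, hab]
      have h2 : v c = (c.val : ℚ) := by simp [hv, hbc.symm]
      rw [h1, h2]
      intro h
      exact hac (Fin.val_injective (by exact_mod_cast h))
    have hvij : v i₀ ≠ v j₀ := by
      intro h
      by_cases h1 : i₀ = b
      · by_cases h2 : j₀ = b
        · exact hij (h1.trans h2.symm)
        · -- v i₀ = a.val, v j₀ = j₀.val ⇒ a = j₀, and b = i₀ means φ j₀ = i₀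
          have hvi : v i₀ = (a.val : ℚ) := by simp [hv, h1]
          have hvj : v j₀ = (j₀.val : ℚ) := by simp [hv, h2]
          rw [hvi, hvj] at h
          have haj : a = j₀ := Fin.val_injective (by exact_mod_cast h)
          exact hC (Or.inr ⟨haj, h1.symm⟩)
      · by_cases h2 : j₀ = b
        · have hvi : v i₀ = (i₀.val : ℚ) := by simp [hv, h1]
          have hvj : v j₀ = (a.val : ℚ) := by simp [hv, h2]
          rw [hvi, hvj] at h
          have hai : a = i₀ := Fin.val_injective (by exact_mod_cast h.symm)
          exact hC (Or.inl ⟨hai, h2.symm⟩)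
        · have hvi : v i₀ = (i₀.val : ℚ) := by simp [hv, h1]
          have hvj : v j₀ = (j₀.val : ℚ) := by simp [hv, h2]
          rw [hvi, hvj] at h
          exact hij (Fin.val_injective (by exact_mod_cast h))
    set F : MvPolynomial (Fin (d + 2) × Fin d) ℚ :=
      sqP (d := d) i₀ j₀ * sqP (d := d) a c - sqP (d := d) i₀ k₀ * sqP (d := d) a b with hF
    have hFne : F ≠ 0 := by
      intro h0
      have h1 := congrArg (MvPolynomial.aeval x) h0
      rw [hF] at h1
      rw [map_sub, map_mul, map_mul, haevalx, haevalx, haevalx, haevalx, map_zero] at h1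
      have hbb : v a - v b = 0 := by rw [hvab, sub_self]
      rw [hbb] at h1
      have h2 : (v i₀ - v j₀) ^ 2 * (v a - v c) ^ 2 = 0 := by
        have h3 : ((0:ℚ)) ^ 2 = 0 := by norm_num
        rw [h3, mul_zero, sub_zero] at h1
        exact h1
      rcases mul_eq_zero.mp h2 with h | h
      · exact hvij (sub_eq_zero.mp (pow_eq_zero_iff (n := 2) (by norm_num) |>.mp h))
      · exact hvac (sub_eq_zero.mp (pow_eq_zero_iff (n := 2) (by norm_num) |>.mp h))
    apply hp F hFne
    rw [hF, map_sub, map_mul, map_mul, aeval_sqP, aeval_sqP, aeval_sqP, aeval_sqP]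
    have e1 := key i₀ hi₀ j₀ hj₀
    have e2 := key i₀ hi₀ k₀ hk₀I
    rw [← ha, ← hb] at e1
    rw [← ha, ← hc] at e2
    rw [e1, e2]
    ring
  -- hence the matching is the identity on I
  have hφid : ∀ i ∈ I, φ i = i := by
    intro i hi
    by_contra hne
    have hsub : ({i} : Finset (Fin (d + 2))) ⊆ I := by simp [hi]
    have hcard : 1 < (I \ {i}).card := by
      rw [Finset.card_sdiff_of_subset hsub, hI]; simp; omega
    obtain ⟨j, hj, k, hk, hjk⟩ := Finset.one_lt_card.mp hcard
    have hjI : j ∈ I := (Finset.mem_sdiff.mp hj).1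
    have hkI : k ∈ I := (Finset.mem_sdiff.mp hk).1
    have hji : j ≠ i := by have := (Finset.mem_sdiff.mp hj).2; simpa using this
    have hki : k ≠ i := by have := (Finset.mem_sdiff.mp hk).2; simpa using this
    have h1 := pairfix i hi j hjI (Ne.symm hji)
    have h2 := pairfix i hi k hkI (Ne.symm hki)
    rcases h1 with ⟨h, _⟩ | ⟨h1a, _⟩
    · exact hne h
    rcases h2 with ⟨h, _⟩ | ⟨h2a, _⟩
    · exact hne h
    exact hjk (h1a.symm.trans h2a)
  have hqp : ∀ i ∈ I, q i = p i := by
    intro i hi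
    have h := hφ i hi
    rwa [hφid i hi] at h
  -- the ratio is 1
  obtain ⟨i₁, hi₁, j₁, hj₁, hij₁⟩ := Finset.one_lt_card.mp (by rw [hI]; omega : 1 < I.card)
  have hr1 : r = 1 := by
    have hk := key i₁ hi₁ j₁ hj₁
    rw [hφid i₁ hi₁, hφid j₁ hj₁] at hk
    have hD : ∑ k, (p i₁ k - p j₁ k) ^ 2 ≠ 0 :=
      sq_sum_ne (fun h => hij₁ (hpinj h))
    have hr2 : r ^ 2 = 1 := by
      have h2 : (1 - r ^ 2) * ∑ k, (p i₁ k - p j₁ k) ^ 2 = 0 := by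
        rw [sub_mul, one_mul, ← hk, sub_self]
      rcases mul_eq_zero.mp h2 with h | h
      · linarith
      · exact absurd h hD
    have h3 : (r - 1) * (r + 1) = 0 := by linear_combination hr2
    rcases mul_eq_zero.mp h3 with h | h
    · linarith
    · linarith
  -- the remaining point
  funext m
  by_cases hm : m ∈ I
  · exact (hqp m hm).symm
  -- equal distances to the common simplex
  have A : ∀ i ∈ I, ∑ k, (q m k - p i k) ^ 2 = ∑ k, (p m k - p i k) ^ 2 := by
    intro i hi
    have h1 := hsq m i
    rw [hqp i hi, hr1] at h1
    simpa using h1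
  have horth : ∀ i ∈ I, ∀ j ∈ I, ∑ k, (q m k - p m k) * (p i k - p j k) = 0 := by
    intro i hi j hj
    have e1 := A i hi
    have e2 := A j hj
    have hcomb : 2 * ∑ k, (q m k - p m k) * (p i k - p j k)
        = ((∑ k, (q m k - p j k) ^ 2) - ∑ k, (p m k - p j k) ^ 2)
          - ((∑ k, (q m k - p i k) ^ 2) - ∑ k, (p m k - p i k) ^ 2) := by
      rw [Finset.mul_sum, ← Finset.sum_sub_distrib, ← Finset.sum_sub_distrib,
        ← Finset.sum_sub_distrib]
      exact Finset.sum_congr rfl fun k _ => by ring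
    rw [e1, e2] at hcomb
    simp at hcomb
    linarith [hcomb]
  -- affine independence of the common simplex via a determinant polynomial
  set ι := I.orderEmbOfFin hI with hι
  have hιmem : ∀ s, ι s ∈ I := fun s => I.orderEmbOfFin_mem hI s
  set M : Matrix (Fin d) (Fin d) ℝ :=
    Matrix.of fun s k => p (ι s.succ) k - p (ι 0) k with hM
  set G : MvPolynomial (Fin (d + 2) × Fin d) ℚ :=
    Matrix.det (Matrix.of fun s k : Fin d =>
      MvPolynomial.X (ι s.succ, k) - MvPolynomial.X (ι 0, k)) with hG
  have hGp : MvPolynomial.aeval pval G = M.det := by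
    rw [hG, AlgHom.map_det]
    congr 1
    ext s k
    simp [hM, hpval]
  have hGne : G ≠ 0 := by
    intro h0
    set y : Fin (d + 2) × Fin d → ℚ := fun uk => if uk.1 = ι uk.2.succ then 1 else 0 with hy
    have h1 : MvPolynomial.aeval y G = 0 := by
      rw [h0]; simp
    rw [hG, AlgHom.map_det] at h1
    have hmat : (MvPolynomial.aeval (R := ℚ) y).mapMatrix
        (Matrix.of fun s k : Fin d =>
          MvPolynomial.X (ι s.succ, k) - MvPolynomial.X (ι 0, k)) = 1 := by
      ext s k
      by_cases h : s = k
      · subst h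
        simp [hy, (Fin.succ_ne_zero s).symm, fun h => Fin.succ_ne_zero s (ι.injective h).symm]
      · have hsk : ι s.succ ≠ ι k.succ := fun hh => h (Fin.succ_injective _ (ι.injective hh))
        have h0k : ι 0 ≠ ι k.succ := fun hh => (Fin.succ_ne_zero k) (ι.injective hh).symm
        simp [hy, hsk, h0k, Matrix.one_apply, h]
    rw [hmat, Matrix.det_one] at h1
    norm_num at h1
  have hdet : M.det ≠ 0 := by
    rw [← hGp]
    exact hp G hGne
  set w : Fin d → ℝ := fun k => q m k - p m k with hw
  have hMw : M.mulVec w = 0 := by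
    funext s
    have h1 := horth (ι s.succ) (hιmem _) (ι 0) (hιmem _)
    simp only [Matrix.mulVec, dotProduct, hM, hw, Matrix.of_apply, Pi.zero_apply]
    rw [← h1]
    exact Finset.sum_congr rfl fun k _ => by ring
  have hw0 : w = 0 := by
    have hinv := Matrix.nonsing_inv_mul M (isUnit_iff_ne_zero.mpr hdet)
    calc w = (1 : Matrix (Fin d) (Fin d) ℝ).mulVec w := (Matrix.one_mulVec w).symm
      _ = (M⁻¹ * M).mulVec w := by rw [hinv]
      _ = M⁻¹.mulVec (M.mulVec w) := (Matrix.mulVec_mulVec w M⁻¹ M).symm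
      _ = M⁻¹.mulVec 0 := by rw [hMw]
      _ = 0 := Matrix.mulVec_zero _
  funext k
  have := congrFun hw0 k
  simp [hw] at this
  linarith [this]
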